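/- arXiv:2111.06778 — 4 statements merged into one kernel-verified Lean document; each statement's English description precedes it below -/
import Mathlib

section
/- Let m ≥ 2 be an integer, let (p_k)_{k≥0} ⊂ [0,1) satisfy ∑_{k=0}^∞ p_k < ∞, and let C₁, C₂ ∈ ℝ. Then there exists a pair of functions u, v : T_m → ℝ solving the directed system (ED1) and satisfying the boundary condition (ED2) with f ≡ C₁ and g ≡ C₂; moreover u and v can be taken to be constant on each level of the tree (u(x) = a_k and v(x) = b_k for every vertex x of level k, where the sequences (a_k), (b_k) satisfy a_k = (1−p_k)a_{k+1} + p_k b_k and b_k = (1−p_k)b_{k+1} + p_k a_k for all k ≥ 0, with a_k → C₁ and b_k → C₂). -/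
open Filter Topology

noncomputable section

/-- The level-`n` truncation of a branch `π` of the `m`-regular tree. -/
def trunc {m : ℕ} (π : ℕ → Fin m) (n : ℕ) : List (Fin m) :=
  List.ofFn (fun i : Fin n => π i)

/-- `ψ(π) = ∑_{k≥1} a_k m^{-k}` for a branch `π = (a_1, a_2, …)`. -/
def psi (m : ℕ) (π : ℕ → Fin m) : ℝ :=
  ∑' k : ℕ, (π k : ℝ) / (m : ℝ) ^ (k + 1)

/-- Maximum of `u` over the successors of the vertex `x`. -/
def treeMax (m : ℕ) (u : List (Fin m) → ℝ) (x : List (Fin m)) : ℝ :=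
  ⨆ i : Fin m, u (x ++ [i])

/-- Minimum of `u` over the successors of the vertex `x`. -/
def treeMin (m : ℕ) (u : List (Fin m) → ℝ) (x : List (Fin m)) : ℝ :=
  ⨅ i : Fin m, u (x ++ [i])

/-- Average of `v` over the successors of the vertex `x`. -/
def treeAvg (m : ℕ) (v : List (Fin m) → ℝ) (x : List (Fin m)) : ℝ :=
  (1 / (m : ℝ)) * ∑ i : Fin m, v (x ++ [i])

/-- The pair `(u, v)` solves the directed system (ED1). -/
def SolED1 (m : ℕ) (p : ℕ → ℝ) (u v : List (Fin m) → ℝ) : Prop :=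
  ∀ x : List (Fin m),
    u x = (1 - p x.length) * ((1 / 2) * treeMax m u x + (1 / 2) * treeMin m u x)
          + p x.length * v x ∧
    v x = (1 - p x.length) * treeAvg m v x + p x.length * u x

/-- The pair `(u, v)` satisfies the boundary condition (ED2). -/
def BoundaryED2 (m : ℕ) (f g : ℝ → ℝ) (u v : List (Fin m) → ℝ) : Prop :=
  ∀ π : ℕ → Fin m,
    Tendsto (fun n => u (trunc π n)) atTop (𝓝 (f (psi m π))) ∧
    Tendsto (fun n => v (trunc π n)) atTop (𝓝 (g (psi m π)))

/-- `(z, w)` is a subsolution of (ED1)–(ED2). -/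
def SubsolED1 (m : ℕ) (p : ℕ → ℝ) (f g : ℝ → ℝ) (z w : List (Fin m) → ℝ) : Prop :=
  (∀ x : List (Fin m),
    z x ≤ (1 - p x.length) * ((1 / 2) * treeMax m z x + (1 / 2) * treeMin m z x)
          + p x.length * w x ∧
    w x ≤ (1 - p x.length) * treeAvg m w x + p x.length * z x) ∧
  ∀ π : ℕ → Fin m,
    limsup (fun n => z (trunc π n)) atTop ≤ f (psi m π) ∧
    limsup (fun n => w (trunc π n)) atTop ≤ g (psi m π)

/-- `(z, w)` is a supersolution of (ED1)–(ED2). -/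
def SupersolED1 (m : ℕ) (p : ℕ → ℝ) (f g : ℝ → ℝ) (z w : List (Fin m) → ℝ) : Prop :=
  (∀ x : List (Fin m),
    z x ≥ (1 - p x.length) * ((1 / 2) * treeMax m z x + (1 / 2) * treeMin m z x)
          + p x.length * w x ∧
    w x ≥ (1 - p x.length) * treeAvg m w x + p x.length * z x) ∧
  ∀ π : ℕ → Fin m,
    f (psi m π) ≤ liminf (fun n => z (trunc π n)) atTop ∧
    g (psi m π) ≤ liminf (fun n => w (trunc π n)) atTop

/-- existence of a level-constant solution of the directed system (ED1)
with constant boundary data, when `∑ p_k < ∞`. -/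
theorem stmt0 (m : ℕ) (hm : 2 ≤ m) (p : ℕ → ℝ) (hp : ∀ k, p k ∈ Set.Ico (0 : ℝ) 1)
    (hsum : Summable p) (C₁ C₂ : ℝ) :
    ∃ a b : ℕ → ℝ,
      (∀ k, a k = (1 - p k) * a (k + 1) + p k * b k ∧
            b k = (1 - p k) * b (k + 1) + p k * a k) ∧
      Tendsto a atTop (𝓝 C₁) ∧ Tendsto b atTop (𝓝 C₂) ∧
      SolED1 m p (fun x => a x.length) (fun x => b x.length) ∧
      BoundaryED2 m (fun _ => C₁) (fun _ => C₂)
        (fun x => a x.length) (fun x => b x.length) := by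
  have hp0 : ∀ k, 0 ≤ p k := fun k => (hp k).1
  have hp1 : ∀ k, p k < 1 := fun k => (hp k).2
  have hratio_pos : ∀ k, 0 < (1 + p k) / (1 - p k) := fun k =>
    div_pos (by linarith [hp0 k]) (by linarith [hp1 k])
  -- the logarithmic increments
  set L : ℕ → ℝ := fun j => Real.log ((1 + p j) / (1 - p j)) with hLdef
  have hL0 : ∀ j, 0 ≤ L j := by
    intro j
    apply Real.log_nonneg
    rw [le_div_iff₀ (by linarith [hp1 j])]
    linarith [hp0 j]
  have hLle : ∀ j, L j ≤ 2 * p j / (1 - p j) := by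
    intro j
    have h := Real.log_le_sub_one_of_pos (hratio_pos j)
    have h1 : (1:ℝ) - p j ≠ 0 := by linarith [hp1 j]
    have : (1 + p j) / (1 - p j) - 1 = 2 * p j / (1 - p j) := by
      field_simp
      ring
    linarith [this ▸ h]
  -- eventually p j ≤ 1/2
  obtain ⟨N, hN⟩ : ∃ N, ∀ j ≥ N, p j ≤ 1 / 2 := by
    have h := hsum.tendsto_atTop_zero
    have h2 : ∀ᶠ x : ℝ in 𝓝 0, x ≤ 1 / 2 :=
      eventually_le_nhds (by norm_num : (0:ℝ) < 1/2)
    exact eventually_atTop.mp (h.eventually h2)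
  have hsumL : Summable L := by
    rw [← summable_nat_add_iff N]
    apply Summable.of_nonneg_of_le (fun j => hL0 _) (fun j => ?_)
      (((summable_nat_add_iff N).mpr hsum).mul_left 4)
    have hpj : p (j + N) ≤ 1 / 2 := hN (j + N) (Nat.le_add_left _ _)
    calc L (j + N) ≤ 2 * p (j + N) / (1 - p (j + N)) := hLle _
      _ ≤ 4 * p (j + N) := by
          rw [div_le_iff₀ (by linarith [hp1 (j + N)])]
          nlinarith [hp0 (j + N)]
  -- tail sums
  set T : ℕ → ℝ := fun k => ∑' j, L (j + k) with hTdef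
  have hsumTail : ∀ k, Summable (fun j => L (j + k)) :=
    fun k => (summable_nat_add_iff k).mpr hsumL
  have hTrec : ∀ k, T k = L k + T (k + 1) := by
    intro k
    have := Summable.tsum_eq_zero_add (hsumTail k)
    simp only [hTdef, zero_add] at this ⊢
    rw [this]
    congr 1
    apply tsum_congr
    intro j
    congr 1
    omega
  have hTlim : Tendsto T atTop (𝓝 0) := by
    simpa [hTdef] using (tendsto_sum_nat_add L)
  -- the difference sequence
  set d : ℕ → ℝ := fun k => (C₁ - C₂) * Real.exp (-(T k)) with hddef
  have hdrec : ∀ k, (1 + p k) * d k = (1 - p k) * d (k + 1) := by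
    intro k
    have hexp : Real.exp (-(T k)) * ((1 + p k) / (1 - p k)) = Real.exp (-(T (k + 1))) := by
      rw [← Real.exp_log (hratio_pos k), ← Real.exp_add]
      congr 1
      have := hTrec k
      simp only [hLdef] at this ⊢
      linarith
    have h1 : (1 - p k) ≠ 0 := by linarith [hp1 k]
    simp only [hddef]
    rw [← hexp]
    field_simp
  have hdlim : Tendsto d atTop (𝓝 (C₁ - C₂)) := by
    have h1 : Tendsto (fun k => Real.exp (-(T k))) atTop (𝓝 (Real.exp (-(0:ℝ)))) :=
      (Real.continuous_exp.tendsto _).comp (hTlim.neg)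
    simpa using h1.const_mul (C₁ - C₂)
  -- the sequences
  refine ⟨fun k => ((C₁ + C₂) + d k) / 2, fun k => ((C₁ + C₂) - d k) / 2, ?_, ?_, ?_, ?_, ?_⟩
  · intro k
    constructor <;> (have := hdrec k; ring_nf; ring_nf at this; linarith)
  · have : Tendsto (fun k => ((C₁ + C₂) + d k) / 2) atTop (𝓝 (((C₁ + C₂) + (C₁ - C₂)) / 2)) :=
      ((tendsto_const_nhds.add hdlim).div_const 2)
    convert this using 2
    ring
  · have : Tendsto (fun k => ((C₁ + C₂) - d k) / 2) atTop (𝓝 (((C₁ + C₂) - (C₁ - C₂)) / 2)) :=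
      ((tendsto_const_nhds.sub hdlim).div_const 2)
    convert this using 2
    ring
  · intro x
    have hFm : Nonempty (Fin m) := ⟨⟨0, by omega⟩⟩
    have hmax : treeMax m (fun y => ((C₁ + C₂) + d y.length) / 2) x
        = ((C₁ + C₂) + d (x.length + 1)) / 2 := by
      simp [treeMax, ciSup_const]
    have hmin : treeMin m (fun y => ((C₁ + C₂) + d y.length) / 2) x
        = ((C₁ + C₂) + d (x.length + 1)) / 2 := by
      simp [treeMin, ciInf_const]
    have havg : treeAvg m (fun y => ((C₁ + C₂) - d y.length) / 2) x
        = ((C₁ + C₂) - d (x.length + 1)) / 2 := by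
      have hm0 : (m : ℝ) ≠ 0 := by positivity
      simp [treeAvg, Finset.sum_const, Finset.card_univ]
      field_simp
    simp only [hmax, hmin, havg]
    have := hdrec x.length
    constructor <;> (ring_nf; ring_nf at this; linarith)
  · intro π
    have hlen : ∀ n, (trunc π n).length = n := by
      intro n; simp [trunc]
    constructor
    · have : Tendsto (fun k => ((C₁ + C₂) + d k) / 2) atTop (𝓝 (((C₁ + C₂) + (C₁ - C₂)) / 2)) :=
        ((tendsto_const_nhds.add hdlim).div_const 2)
      have h2 : (((C₁ + C₂) + (C₁ - C₂)) / 2) = C₁ := by ring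
      rw [h2] at this
      simpa [hlen] using this
    · have : Tendsto (fun k => ((C₁ + C₂) - d k) / 2) atTop (𝓝 (((C₁ + C₂) - (C₁ - C₂)) / 2)) :=
        ((tendsto_const_nhds.sub hdlim).div_const 2)
      have h2 : (((C₁ + C₂) - (C₁ - C₂)) / 2) = C₂ := by ring
      rw [h2] at this
      simpa [hlen] using this
end
end

section
/- Let m ≥ 2 and let (p_k)_{k≥0} ⊂ (0,1) be a sequence of positive numbers with ∑_{k=1}^∞ p_k = +∞. Then for any two constants C₁ ≠ C₂ there is no pair u, v : T_m → ℝ solving the directed system (ED1) and satisfying the boundary condition (ED2) with f ≡ C₁ and g ≡ C₂. -/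
open Filter Topology

noncomputable section

/-! ### Auxiliary lemmas -/

lemma trunc_succ {m : ℕ} (π : ℕ → Fin m) (n : ℕ) :
    trunc π (n+1) = trunc π n ++ [π n] := by
  rw [trunc, List.ofFn_succ']
  simp [trunc, Fin.last, List.concat_eq_append]

lemma trunc_length {m : ℕ} (π : ℕ → Fin m) (n : ℕ) : (trunc π n).length = n := by
  simp [trunc]

lemma exists_branch {m : ℕ} (P : List (Fin m) → Fin m → Prop)
    (h : ∀ x, ∃ i, P x i) : ∃ π : ℕ → Fin m, ∀ n, P (trunc π n) (π n) := by
  choose F hF using h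
  let X : ℕ → List (Fin m) := fun n => Nat.rec [] (fun _ ih => ih ++ [F ih]) n
  refine ⟨fun n => F (X n), fun n => ?_⟩
  have hX : ∀ n, trunc (fun k => F (X k)) n = X n := by
    intro n
    induction n with
    | zero => simp [trunc, X]
    | succ n ih => rw [trunc_succ, ih]
  rw [hX]
  exact hF (X n)

lemma key_analysis (p β a : ℕ → ℝ) (hp : ∀ k, p k ∈ Set.Ioo (0:ℝ) 1) (hdiv : ¬ Summable p)
    (L L' : ℝ) (hLL : L < L')
    (hrec : ∀ n, (1 - p n) * β (n+1) + p n * a n ≤ β n)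
    (hβ : Tendsto β atTop (𝓝 L)) (ha : Tendsto a atTop (𝓝 L')) : False := by
  set D := L' - L with hD
  have hDpos : 0 < D := by simp [hD]; linarith
  have hstep : ∀ n, p n * (a n - β (n+1)) ≤ β n - β (n+1) := by
    intro n; nlinarith [hrec n]
  have hβ' : Tendsto (fun n => β (n+1)) atTop (𝓝 L) :=
    hβ.comp (tendsto_add_atTop_nat 1)
  have hdiff : Tendsto (fun n => a n - β (n+1)) atTop (𝓝 D) := ha.sub hβ'
  have hev : ∀ᶠ n in atTop, D/2 < a n - β (n+1) :=
    hdiff.eventually (eventually_gt_nhds (by linarith))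
  obtain ⟨N, hN⟩ := eventually_atTop.1 hev
  have hstep2 : ∀ n, N ≤ n → p n * (D/2) ≤ β n - β (n+1) := by
    intro n hn
    have h1 := hstep n
    have h2 := hN n hn
    have hpn := (hp n).1
    nlinarith
  have claim : ∀ M, (∑ n ∈ Finset.Ico N (N+M), p n) * (D/2) ≤ β N - β (N+M) := by
    intro M
    induction M with
    | zero => simp
    | succ M ih =>
      rw [show N + (M+1) = (N+M) + 1 by ring, Finset.sum_Ico_succ_top (by omega)]
      have := hstep2 (N+M) (by omega)
      nlinarith
  have hpnn : ∀ n, 0 ≤ p n := fun n => le_of_lt (hp n).1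
  have hS : Tendsto (fun M => ∑ n ∈ Finset.range M, p n) atTop atTop :=
    (not_summable_iff_tendsto_nat_atTop_of_nonneg hpnn).1 hdiv
  have hS2 : Tendsto (fun M => ∑ n ∈ Finset.Ico N (N+M), p n) atTop atTop := by
    have heq : ∀ M, ∑ n ∈ Finset.Ico N (N+M), p n
        = (∑ n ∈ Finset.range (N+M), p n) - ∑ n ∈ Finset.range N, p n := by
      intro M
      rw [Finset.sum_Ico_eq_sub _ (by omega)]
    simp only [heq]
    apply Tendsto.atTop_add _ tendsto_const_nhds
    exact hS.comp (tendsto_atTop_atTop_of_monotone (fun a b hab => by omega)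
      (fun b => ⟨b, by omega⟩))
  have hS3 : Tendsto (fun M => (∑ n ∈ Finset.Ico N (N+M), p n) * (D/2)) atTop atTop :=
    hS2.atTop_mul_const (by linarith)
  have hβ2 : Tendsto (fun M => β N - β (N+M)) atTop (𝓝 (β N - L)) := by
    apply tendsto_const_nhds.sub
    exact hβ.comp (tendsto_atTop_atTop_of_monotone (fun a b hab => by omega)
      (fun b => ⟨b, by omega⟩))
  have h1 : ∀ᶠ M in atTop, β N - L + 1 < (∑ n ∈ Finset.Ico N (N+M), p n) * (D/2) :=
    hS3.eventually (eventually_gt_atTop _)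
  have h2 : ∀ᶠ M in atTop, β N - β (N+M) < β N - L + 1 :=
    hβ2.eventually (eventually_lt_nhds (by linarith))
  obtain ⟨M, hM1, hM2⟩ := (h1.and h2).exists
  have := claim M
  linarith

lemma no_sub {m : ℕ} (p : ℕ → ℝ) (hp : ∀ k, p k ∈ Set.Ioo (0:ℝ) 1) (hdiv : ¬ Summable p)
    (z t : List (Fin m) → ℝ) (L L' : ℝ) (hLL : L < L')
    (hkey : ∀ x : List (Fin m), ∃ i : Fin m,
      (1 - p x.length) * z (x ++ [i]) + p x.length * t x ≤ z x)
    (hbz : ∀ π : ℕ → Fin m, Tendsto (fun n => z (trunc π n)) atTop (𝓝 L))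
    (hbt : ∀ π : ℕ → Fin m, Tendsto (fun n => t (trunc π n)) atTop (𝓝 L')) : False := by
  obtain ⟨π, hπ⟩ := exists_branch _ hkey
  refine key_analysis p (fun n => z (trunc π n)) (fun n => t (trunc π n)) hp hdiv L L' hLL
    ?_ (hbz π) (hbt π)
  intro n
  have h := hπ n
  rw [trunc_length] at h
  rw [← trunc_succ] at h
  exact h

/-- if `∑ p_k = +∞` then the directed system (ED1) with constant boundary
data `C₁ ≠ C₂` has no solution. -/
theorem stmt6 (m : ℕ) (hm : 2 ≤ m) (p : ℕ → ℝ) (hp : ∀ k, p k ∈ Set.Ioo (0 : ℝ) 1)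
    (hdiv : ¬ Summable p) (C₁ C₂ : ℝ) (hne : C₁ ≠ C₂) :
    ¬ ∃ u v : List (Fin m) → ℝ,
        SolED1 m p u v ∧ BoundaryED2 m (fun _ => C₁) (fun _ => C₂) u v := by
  rintro ⟨u, v, hsol, hbd⟩
  haveI : NeZero m := ⟨by omega⟩
  have hm0 : (0:ℝ) < m := by exact_mod_cast Nat.lt_of_lt_of_le (by norm_num) hm
  have hkeyu : ∀ x : List (Fin m), ∃ i : Fin m,
      (1 - p x.length) * u (x ++ [i]) + p x.length * v x ≤ u x := by
    intro x
    obtain ⟨i, hi⟩ := Finite.exists_min (fun i : Fin m => u (x ++ [i]))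
    refine ⟨i, ?_⟩
    have hx := (hsol x).1
    have h1 : u (x ++ [i]) ≤ treeMin m u x := le_ciInf hi
    have h2 : treeMin m u x ≤ treeMax m u x := by
      rw [treeMin, treeMax]
      exact (ciInf_le (Finite.bddBelow_range _) i).trans (le_ciSup (Finite.bddAbove_range (fun j : Fin m => u (x ++ [j]))) i)
    have hq := (hp x.length).2
    nlinarith
  have hkeyv : ∀ x : List (Fin m), ∃ i : Fin m,
      (1 - p x.length) * v (x ++ [i]) + p x.length * u x ≤ v x := by
    intro x
    obtain ⟨i, hi⟩ := Finite.exists_min (fun i : Fin m => v (x ++ [i]))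
    refine ⟨i, ?_⟩
    have hx := (hsol x).2
    have hsum : (m:ℝ) * v (x ++ [i]) ≤ ∑ j : Fin m, v (x ++ [j]) := by
      calc (m:ℝ) * v (x ++ [i]) = ∑ _j : Fin m, v (x ++ [i]) := by
            simp [Finset.sum_const, mul_comm]
        _ ≤ ∑ j : Fin m, v (x ++ [j]) := Finset.sum_le_sum (fun j _ => hi j)
    have havg : v (x ++ [i]) ≤ treeAvg m v x := by
      rw [treeAvg]
      rw [div_mul_eq_mul_div, one_mul, le_div_iff₀ hm0]
      linarith [hsum]
    have hq := (hp x.length).2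
    nlinarith
  rcases lt_or_gt_of_ne hne with h | h
  · exact no_sub p hp hdiv u v C₁ C₂ h hkeyu (fun π => (hbd π).1) (fun π => (hbd π).2)
  · exact no_sub p hp hdiv v u C₂ C₁ h hkeyv (fun π => (hbd π).2) (fun π => (hbd π).1)
end
end

section
/- Let m ≥ 2, (p_k)_{k≥0} ⊂ [0,1), f, g : [0,1] → ℝ, and η > 0. Let (u₊, v₊) be a subsolution and (u⁺, v⁺) a supersolution of (ED1)–(ED2), and set Q = {x ∈ T_m : max{(u₊−u⁺)(x), (v₊−v⁺)(x)} ≥ η}. If x ∈ Q, then there exists a successor y ∈ S(x) with y ∈ Q. -/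
open Filter Topology

noncomputable section

/-- if `x ∈ Q = {max{(u₊−u⁺), (v₊−v⁺)} ≥ η}` then some successor of `x`
belongs to `Q`. -/
theorem stmt7 (m : ℕ) (hm : 2 ≤ m) (p : ℕ → ℝ) (hp : ∀ k, p k ∈ Set.Ico (0 : ℝ) 1)
    (f g : ℝ → ℝ) (η : ℝ) (hη : 0 < η)
    (usub vsub usup vsup : List (Fin m) → ℝ)
    (hsub : SubsolED1 m p f g usub vsub)
    (hsup : SupersolED1 m p f g usup vsup)
    (x : List (Fin m))
    (hx : η ≤ max (usub x - usup x) (vsub x - vsup x)) :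
    ∃ i : Fin m,
      η ≤ max (usub (x ++ [i]) - usup (x ++ [i])) (vsub (x ++ [i]) - vsup (x ++ [i])) := by
  haveI : Nonempty (Fin m) := ⟨⟨0, by omega⟩⟩
  have hq := hp x.length
  have hq0 : (0:ℝ) ≤ p x.length := hq.1
  have hq1 : (0:ℝ) < 1 - p x.length := by linarith [hq.2]
  set F : Fin m → ℝ := fun i =>
    max (usub (x ++ [i]) - usup (x ++ [i])) (vsub (x ++ [i]) - vsup (x ++ [i])) with hF
  obtain ⟨i, hi⟩ := Finite.exists_max F
  refine ⟨i, ?_⟩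
  have hub : ∀ j : Fin m, usub (x ++ [j]) ≤ usup (x ++ [j]) + F i := by
    intro j
    have h1 : usub (x ++ [j]) - usup (x ++ [j]) ≤ F i :=
      le_trans (le_max_left _ _) (hi j)
    linarith
  have hvb : ∀ j : Fin m, vsub (x ++ [j]) ≤ vsup (x ++ [j]) + F i := by
    intro j
    have h1 : vsub (x ++ [j]) - vsup (x ++ [j]) ≤ F i :=
      le_trans (le_max_right _ _) (hi j)
    linarith
  have hMax : treeMax m usub x ≤ treeMax m usup x + F i := by
    unfold treeMax
    apply ciSup_le
    intro j
    exact (hub j).trans (add_le_add_left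
      (le_ciSup (f := fun j : Fin m => usup (x ++ [j])) (Finite.bddAbove_range _) j) _)
  have hMin : treeMin m usub x ≤ treeMin m usup x + F i := by
    obtain ⟨j, hj⟩ := exists_eq_ciInf_of_finite (f := fun j : Fin m => usup (x ++ [j]))
    unfold treeMin
    calc ⨅ j : Fin m, usub (x ++ [j]) ≤ usub (x ++ [j]) := ciInf_le (Finite.bddBelow_range _) j
      _ ≤ usup (x ++ [j]) + F i := hub j
      _ = (⨅ j : Fin m, usup (x ++ [j])) + F i := by rw [hj]
  have hAvg : treeAvg m vsub x ≤ treeAvg m vsup x + F i := by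
    have hsum : ∑ j : Fin m, vsub (x ++ [j]) ≤ ∑ j : Fin m, (vsup (x ++ [j]) + F i) :=
      Finset.sum_le_sum (fun j _ => hvb j)
    have hsum2 : ∑ j : Fin m, (vsup (x ++ [j]) + F i)
        = (∑ j : Fin m, vsup (x ++ [j])) + m * F i := by
      rw [Finset.sum_add_distrib]
      simp [Finset.card_univ, mul_comm]
    have hm0 : (0:ℝ) < m := by positivity
    unfold treeAvg
    rw [div_mul_eq_mul_div, div_mul_eq_mul_div, one_mul, one_mul]
    rw [div_add' _ _ _ (ne_of_gt hm0), div_le_div_iff_of_pos_right hm0]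
    calc ∑ j : Fin m, vsub (x ++ [j]) ≤ (∑ j : Fin m, vsup (x ++ [j])) + m * F i := by
          rw [← hsum2]; exact hsum
      _ = (∑ j : Fin m, vsup (x ++ [j])) + F i * m := by ring
  have hsub1 := (hsub.1 x).1
  have hsub2 := (hsub.1 x).2
  have hsup1 := (hsup.1 x).1
  have hsup2 := (hsup.1 x).2
  have key1 : usub x - usup x ≤ (1 - p x.length) * F i + p x.length * (vsub x - vsup x) := by
    have hmid : (1/2) * treeMax m usub x + (1/2) * treeMin m usub x
        ≤ ((1/2) * treeMax m usup x + (1/2) * treeMin m usup x) + F i := by linarith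
    have := mul_le_mul_of_nonneg_left hmid (le_of_lt hq1)
    nlinarith
  have key2 : vsub x - vsup x ≤ (1 - p x.length) * F i + p x.length * (usub x - usup x) := by
    have := mul_le_mul_of_nonneg_left hAvg (le_of_lt hq1)
    nlinarith
  set A : ℝ := max (usub x - usup x) (vsub x - vsup x) with hA
  have h3 : A ≤ (1 - p x.length) * F i + p x.length * A := by
    apply max_le
    · exact key1.trans (by
        have : vsub x - vsup x ≤ A := le_max_right _ _
        nlinarith)
    · exact key2.trans (by
        have : usub x - usup x ≤ A := le_max_left _ _
        nlinarith)
  have h4 : (1 - p x.length) * A ≤ (1 - p x.length) * F i := by nlinarith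
  have h5 : A ≤ F i := le_of_mul_le_mul_left (by linarith) hq1
  exact hx.trans h5
end
end

section
/- Let m ≥ 2, let F, G be averaging operators, let (p_k), (q_k) ⊂ [0,1) and (β^u_k), (β^v_k) ⊂ [0,c] with c < 1 and β^u_0 = β^v_0 = 0, and let f, g : [0,1] → ℝ. Let (u̲, v̲) be a subsolution and (ū, v̄) a supersolution of (ED3)–(ED4), let η > 0, and suppose the set Q = {x ∈ T_m : max{(u̲−ū)(x), (v̲−v̄)(x)} ≥ η} is nonempty. Let x₀ ∈ Q be an element of Q of minimal level. Then there exists an infinite sequence x₀, x₁, x₂, … with x_{j+1} ∈ S(x_j) and x_j ∈ Q for all j ≥ 0. -/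
open Filter Topology

noncomputable section

/-- `F : ℝ^m → ℝ` is an averaging operator. -/
structure IsAveraging (m : ℕ) (F : (Fin m → ℝ) → ℝ) : Prop where
  continuous : Continuous F
  map_zero : F (fun _ => 0) = 0
  map_one : F (fun _ => 1) = 1
  homog : ∀ (t : ℝ) (x : Fin m → ℝ), F (fun i => t * x i) = t * F x
  translate : ∀ (t : ℝ) (x : Fin m → ℝ), F (fun i => t + x i) = t + F x
  lt_max : ∀ x : Fin m → ℝ, (∃ i j, x i ≠ x j) → F x < ⨆ i, x i
  mono : ∀ x y : Fin m → ℝ, (∀ i, x i ≤ y i) → F x ≤ F y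
  perm_invariant : ∀ (σ : Equiv.Perm (Fin m)) (x : Fin m → ℝ), F (x ∘ σ) = F x

/-- The pair `(u, v)` solves the general system (ED3). -/
def SolED3 (m : ℕ) (F G : (Fin m → ℝ) → ℝ) (p q βu βv : ℕ → ℝ)
    (u v : List (Fin m) → ℝ) : Prop :=
  ∀ x : List (Fin m),
    u x = (1 - p x.length) * ((1 - βu x.length) * F (fun i => u (x ++ [i]))
            + βu x.length * u x.dropLast) + p x.length * v x ∧
    v x = (1 - q x.length) * ((1 - βv x.length) * G (fun i => v (x ++ [i]))
            + βv x.length * v x.dropLast) + q x.length * u x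

/-- The pair `(u, v)` satisfies the boundary condition (ED4). -/
def BoundaryED4 (m : ℕ) (f g : ℝ → ℝ) (u v : List (Fin m) → ℝ) : Prop :=
  ∀ π : ℕ → Fin m,
    Tendsto (fun n => u (trunc π n)) atTop (𝓝 (f (psi m π))) ∧
    Tendsto (fun n => v (trunc π n)) atTop (𝓝 (g (psi m π)))

/-- `(z, w)` is a subsolution of (ED3)–(ED4). -/
def SubsolED3 (m : ℕ) (F G : (Fin m → ℝ) → ℝ) (p q βu βv : ℕ → ℝ)
    (f g : ℝ → ℝ) (z w : List (Fin m) → ℝ) : Prop :=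
  (∀ x : List (Fin m),
    z x ≤ (1 - p x.length) * ((1 - βu x.length) * F (fun i => z (x ++ [i]))
            + βu x.length * z x.dropLast) + p x.length * w x ∧
    w x ≤ (1 - q x.length) * ((1 - βv x.length) * G (fun i => w (x ++ [i]))
            + βv x.length * w x.dropLast) + q x.length * z x) ∧
  ∀ π : ℕ → Fin m,
    limsup (fun n => z (trunc π n)) atTop ≤ f (psi m π) ∧
    limsup (fun n => w (trunc π n)) atTop ≤ g (psi m π)

/-- `(z, w)` is a supersolution of (ED3)–(ED4). -/
def SupersolED3 (m : ℕ) (F G : (Fin m → ℝ) → ℝ) (p q βu βv : ℕ → ℝ)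
    (f g : ℝ → ℝ) (z w : List (Fin m) → ℝ) : Prop :=
  (∀ x : List (Fin m),
    z x ≥ (1 - p x.length) * ((1 - βu x.length) * F (fun i => z (x ++ [i]))
            + βu x.length * z x.dropLast) + p x.length * w x ∧
    w x ≥ (1 - q x.length) * ((1 - βv x.length) * G (fun i => w (x ++ [i]))
            + βv x.length * w x.dropLast) + q x.length * z x) ∧
  ∀ π : ℕ → Fin m,
    f (psi m π) ≤ liminf (fun n => z (trunc π n)) atTop ∧
    g (psi m π) ≤ liminf (fun n => w (trunc π n)) atTop

/-- The coefficient conditions (C). -/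
def CoeffCond (p q βu βv : ℕ → ℝ) : Prop :=
  Summable p ∧ Summable q ∧
  Summable (fun k => ∏ j ∈ Finset.Icc 1 k, βu j / (1 - βu j)) ∧
  Summable (fun k => ∏ j ∈ Finset.Icc 1 k, βv j / (1 - βv j))


/-- Auxiliary: the one-step comparison lemma. -/
lemma stmt15_aux {m : ℕ} (hm0 : 0 < m) {F : (Fin m → ℝ) → ℝ} (hF : IsAveraging m F)
    (us up : Fin m → ℝ) (p β da' db M : ℝ)
    (hp0 : 0 ≤ p) (hp1 : p < 1) (hβ0 : 0 ≤ β) (hβ1 : β < 1)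
    (hda : M ≤ (1 - p) * ((1 - β) * (F us - F up) + β * da') + p * db)
    (hda' : da' ≤ M) (hdb : db ≤ M) :
    ∃ i, M ≤ us i - up i := by
  haveI : Nonempty (Fin m) := Fin.pos_iff_nonempty.mp hm0
  have hune : (Finset.univ : Finset (Fin m)).Nonempty := Finset.univ_nonempty
  obtain ⟨i0, _, hi0⟩ := Finset.exists_mem_eq_sup' hune (fun i => us i - up i)
  set A := Finset.univ.sup' hune (fun i => us i - up i) with hA
  have hFA : F us - F up ≤ A := by
    have hle : ∀ i, us i ≤ A + up i := fun i => by
      have : us i - up i ≤ A := by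
        rw [hA]; exact Finset.le_sup' (fun j => us j - up j) (Finset.mem_univ i)
      linarith
    have h := hF.mono us (fun i => A + up i) hle
    rw [hF.translate A up] at h
    linarith
  have hMA : M ≤ A := by
    nlinarith [mul_le_mul_of_nonneg_left hFA
        (mul_nonneg (by linarith : (0:ℝ) ≤ 1 - p) (by linarith : (0:ℝ) ≤ 1 - β)),
      mul_le_mul_of_nonneg_left hda' (mul_nonneg (by linarith : (0:ℝ) ≤ 1 - p) hβ0),
      mul_le_mul_of_nonneg_left hdb hp0,
      mul_pos (by linarith : (0:ℝ) < 1 - p) (by linarith : (0:ℝ) < 1 - β)]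
  exact ⟨i0, hi0 ▸ hMA⟩

/-- starting from an element of minimal level of the set
`Q = {x : max{(u̲−ū)(x), (v̲−v̄)(x)} ≥ η}`, there is an infinite chain of successors
staying in `Q`. -/
theorem stmt15 (m : ℕ) (hm : 2 ≤ m)
    (F G : (Fin m → ℝ) → ℝ) (hF : IsAveraging m F) (hG : IsAveraging m G)
    (p q βu βv : ℕ → ℝ)
    (hp : ∀ k, p k ∈ Set.Ico (0 : ℝ) 1) (hq : ∀ k, q k ∈ Set.Ico (0 : ℝ) 1)
    (c : ℝ) (hc : c < 1)
    (hβu : ∀ k, βu k ∈ Set.Icc (0 : ℝ) c) (hβv : ∀ k, βv k ∈ Set.Icc (0 : ℝ) c)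
    (hβu0 : βu 0 = 0) (hβv0 : βv 0 = 0)
    (f g : ℝ → ℝ) (usub vsub usup vsup : List (Fin m) → ℝ)
    (hsub : SubsolED3 m F G p q βu βv f g usub vsub)
    (hsup : SupersolED3 m F G p q βu βv f g usup vsup)
    (η : ℝ) (hη : 0 < η)
    (x₀ : List (Fin m))
    (hx₀ : η ≤ max (usub x₀ - usup x₀) (vsub x₀ - vsup x₀))
    (hmin : ∀ y : List (Fin m),
      η ≤ max (usub y - usup y) (vsub y - vsup y) → x₀.length ≤ y.length) :
    ∃ seq : ℕ → List (Fin m), seq 0 = x₀ ∧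
      ∀ j : ℕ, (∃ i : Fin m, seq (j + 1) = seq j ++ [i]) ∧
        η ≤ max (usub (seq j) - usup (seq j)) (vsub (seq j) - vsup (seq j)) := by
  classical
  have hm0 : 0 < m := by omega
  set z : List (Fin m) → ℝ := fun x => usub x - usup x with hzdef
  set w : List (Fin m) → ℝ := fun x => vsub x - vsup x with hwdef
  have key : ∀ x : List (Fin m), z x.dropLast ≤ max (z x) (w x) →
      w x.dropLast ≤ max (z x) (w x) →
      ∃ i : Fin m, max (z x) (w x) ≤ max (z (x ++ [i])) (w (x ++ [i])) := by
    intro x hz' hw'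
    rcases le_total (w x) (z x) with hcase | hcase
    · have hM : max (z x) (w x) = z x := max_eq_left hcase
      have h1 := (hsub.1 x).1
      have h2 := (hsup.1 x).1
      have hring : ((1 - p x.length) * ((1 - βu x.length) * F (fun i => usub (x ++ [i]))
              + βu x.length * usub x.dropLast) + p x.length * vsub x)
            - ((1 - p x.length) * ((1 - βu x.length) * F (fun i => usup (x ++ [i]))
              + βu x.length * usup x.dropLast) + p x.length * vsup x)
          = (1 - p x.length) * ((1 - βu x.length) *
              (F (fun i => usub (x ++ [i])) - F (fun i => usup (x ++ [i])))
              + βu x.length * z x.dropLast) + p x.length * w x := by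
        simp only [hzdef, hwdef]; ring
      have hda : max (z x) (w x) ≤ (1 - p x.length) * ((1 - βu x.length) *
            (F (fun i => usub (x ++ [i])) - F (fun i => usup (x ++ [i])))
            + βu x.length * z x.dropLast) + p x.length * w x := by
        rw [hM]; simp only [hzdef]
        rw [← hring]; linarith
      obtain ⟨i, hi⟩ := stmt15_aux hm0 hF (fun i => usub (x ++ [i])) (fun i => usup (x ++ [i]))
        (p x.length) (βu x.length) (z x.dropLast) (w x) (max (z x) (w x))
        (hp x.length).1 (hp x.length).2 (hβu x.length).1
        (lt_of_le_of_lt (hβu x.length).2 hc) hda hz' (le_max_right _ _)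
      exact ⟨i, le_trans hi (le_max_left _ _)⟩
    · have hM : max (z x) (w x) = w x := max_eq_right hcase
      have h1 := (hsub.1 x).2
      have h2 := (hsup.1 x).2
      have hring : ((1 - q x.length) * ((1 - βv x.length) * G (fun i => vsub (x ++ [i]))
              + βv x.length * vsub x.dropLast) + q x.length * usub x)
            - ((1 - q x.length) * ((1 - βv x.length) * G (fun i => vsup (x ++ [i]))
              + βv x.length * vsup x.dropLast) + q x.length * usup x)
          = (1 - q x.length) * ((1 - βv x.length) *
              (G (fun i => vsub (x ++ [i])) - G (fun i => vsup (x ++ [i])))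
              + βv x.length * w x.dropLast) + q x.length * z x := by
        simp only [hzdef, hwdef]; ring
      have hda : max (z x) (w x) ≤ (1 - q x.length) * ((1 - βv x.length) *
            (G (fun i => vsub (x ++ [i])) - G (fun i => vsup (x ++ [i])))
            + βv x.length * w x.dropLast) + q x.length * z x := by
        rw [hM]; simp only [hwdef]
        rw [← hring]; linarith
      obtain ⟨i, hi⟩ := stmt15_aux hm0 hG (fun i => vsub (x ++ [i])) (fun i => vsup (x ++ [i]))
        (q x.length) (βv x.length) (w x.dropLast) (z x) (max (z x) (w x))
        (hq x.length).1 (hq x.length).2 (hβv x.length).1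
        (lt_of_le_of_lt (hβv x.length).2 hc) hda hw' (le_max_left _ _)
      exact ⟨i, le_trans hi (le_max_right _ _)⟩
  set P : List (Fin m) → Prop := fun x => η ≤ max (z x) (w x) ∧
      z x.dropLast ≤ max (z x) (w x) ∧ w x.dropLast ≤ max (z x) (w x) with hPdef
  have hP0 : P x₀ := by
    refine ⟨hx₀, ?_⟩
    by_cases h : x₀ = []
    · subst h
      simp only [List.dropLast_nil]
      exact ⟨le_max_left _ _, le_max_right _ _⟩
    · have hlt : ¬ η ≤ max (z x₀.dropLast) (w x₀.dropLast) := by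
        intro hcon
        have h1 := hmin _ hcon
        have h2 : x₀.dropLast.length < x₀.length := by
          rw [List.length_dropLast]
          have := List.length_pos_iff.mpr h
          omega
        omega
      push_neg at hlt
      constructor
      · calc z x₀.dropLast ≤ max (z x₀.dropLast) (w x₀.dropLast) := le_max_left _ _
          _ ≤ max (z x₀) (w x₀) := le_trans hlt.le hx₀
      · calc w x₀.dropLast ≤ max (z x₀.dropLast) (w x₀.dropLast) := le_max_right _ _
          _ ≤ max (z x₀) (w x₀) := le_trans hlt.le hx₀
  have step : ∀ x, P x → ∃ y, (∃ i : Fin m, y = x ++ [i]) ∧ P y := by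
    intro x hx
    obtain ⟨h1, h2, h3⟩ := hx
    obtain ⟨i, hi⟩ := key x h2 h3
    refine ⟨x ++ [i], ⟨i, rfl⟩, le_trans h1 hi, ?_, ?_⟩
    · rw [List.dropLast_concat]
      exact le_trans (le_max_left _ _) hi
    · rw [List.dropLast_concat]
      exact le_trans (le_max_right _ _) hi
  let nextfn : {x : List (Fin m) // P x} → {x : List (Fin m) // P x} :=
    fun s => ⟨(step s.1 s.2).choose, (step s.1 s.2).choose_spec.2⟩
  let seq' : ℕ → {x : List (Fin m) // P x} :=
    fun n => Nat.rec ⟨x₀, hP0⟩ (fun _ prev => nextfn prev) n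
  refine ⟨fun n => (seq' n).1, rfl, fun j => ⟨?_, (seq' j).2.1⟩⟩
  exact (step (seq' j).1 (seq' j).2).choose_spec.1
end
end
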